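/- Every solo-RWF-LTF observable memory sequence σ1 and every observable memory sequence σ2 with procs(σ1) ∩ procs(σ2) = ∅ are weakly mergeable in TSO. -/

import Mathlib

set_option autoImplicit false

namespace WMM

universe u v

/-! ### Memory actions and events -/

inductive MemAct (Var Val : Type) : Type where
  | write (x : Var) (v : Val)
  | read (x : Var) (v : Val)
  | rmw (x : Var) (vold vnew : Val)
  | fence

structure MemEv (Proc Var Val : Type) : Type where
  proc : Proc
  act : MemAct Var Val

section Mem

variable {Proc Var Val : Type}

def MemEv.isWrite (e : MemEv Proc Var Val) : Prop := ∃ x v, e.act = MemAct.write x v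
def MemEv.isRead (e : MemEv Proc Var Val) : Prop := ∃ x v, e.act = MemAct.read x v
def MemEv.isRMW (e : MemEv Proc Var Val) : Prop := ∃ x v w, e.act = MemAct.rmw x v w
def MemEv.isFence (e : MemEv Proc Var Val) : Prop := e.act = MemAct.fence

/-- The set of processes appearing in an observable memory sequence. -/
def memProcs (σ : List (MemEv Proc Var Val)) : Set Proc := {p | ∃ e ∈ σ, MemEv.proc e = p}

end Mem

/-! ### Shuffles -/

/-- `Shuffle s1 s2 s` means `s` is an interleaving of `s1` and `s2`. -/
inductive Shuffle {α : Type u} : List α → List α → List α → Prop where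
  | nil : Shuffle [] [] []
  | left {s1 s2 s : List α} (x : α) : Shuffle s1 s2 s → Shuffle (s1 ++ [x]) s2 (s ++ [x])
  | right {s1 s2 s : List α} (x : α) : Shuffle s1 s2 s → Shuffle s1 (s2 ++ [x]) (s ++ [x])

/-! ### Paths of a labeled transition relation -/

inductive LTSPath {S : Type u} {L : Type v} (step : S → L → S → Prop) : S → List L → S → Prop where
  | nil (s : S) : LTSPath step s [] s
  | cons {s s' s'' : S} {l : L} {ls : List L} :
      step s l s' → LTSPath step s' ls s'' → LTSPath step s (l :: ls) s''

/-! ### Memory models -/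

/-- A memory model: an LTS whose labels are memory events or the silent label `τ = none`. -/
structure MemModel (Proc Var Val : Type) : Type 1 where
  State : Type
  init : State
  step : State → Option (MemEv Proc Var Val) → State → Prop

section MemModel

variable {Proc Var Val : Type}

/-- A state is stable if no silent (`τ`) transition is enabled. -/
def MemModel.Stable (M : MemModel Proc Var Val) (q : M.State) : Prop :=
  ∀ q', ¬ M.step q none q'

/-- Observable memory sequences from a state: traces with `τ` steps erased. -/
def MemModel.OTraces (M : MemModel Proc Var Val) (q : M.State) :
    Set (List (MemEv Proc Var Val)) :=
  {σ | ∃ (π : List (Option (MemEv Proc Var Val))) (q' : M.State),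
      LTSPath M.step q π q' ∧ π.reduceOption = σ}

def WeaklyMergeable (M : MemModel Proc Var Val) (σ1 σ2 : List (MemEv Proc Var Val)) : Prop :=
  ∀ q0 : M.State, M.Stable q0 → σ1 ∈ M.OTraces q0 → σ2 ∈ M.OTraces q0 →
    ∃ σ, Shuffle σ1 σ2 σ ∧ σ ∈ M.OTraces q0

def StronglyMergeable (M : MemModel Proc Var Val) (σ1 σ2 : List (MemEv Proc Var Val)) : Prop :=
  ∀ q0 : M.State, M.Stable q0 → σ1 ∈ M.OTraces q0 → σ2 ∈ M.OTraces q0 →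
    ∀ σ, Shuffle σ1 σ2 σ → σ ∈ M.OTraces q0

/-- Weak/strong mergeability, selected by a Boolean flag. -/
def MemMergeable (strong : Bool) (M : MemModel Proc Var Val)
    (σ1 σ2 : List (MemEv Proc Var Val)) : Prop :=
  if strong then StronglyMergeable M σ1 σ2 else WeaklyMergeable M σ1 σ2

end MemModel

/-! ### The SCM, TSO and RA memory models -/

section Models

variable (Proc Var Val : Type)

inductive SCMStep [DecidableEq Var] :
    (Var → Val) → Option (MemEv Proc Var Val) → (Var → Val) → Prop where
  | write (m : Var → Val) (p : Proc) (x : Var) (v : Val) :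
      SCMStep m (some ⟨p, MemAct.write x v⟩) (Function.update m x v)
  | read (m : Var → Val) (p : Proc) (x : Var) :
      SCMStep m (some ⟨p, MemAct.read x (m x)⟩) m
  | rmw (m : Var → Val) (p : Proc) (x : Var) (vnew : Val) :
      SCMStep m (some ⟨p, MemAct.rmw x (m x) vnew⟩) (Function.update m x vnew)
  | fence (m : Var → Val) (p : Proc) :
      SCMStep m (some ⟨p, MemAct.fence⟩) m

def SCMModel [DecidableEq Var] [Zero Val] : MemModel Proc Var Val where
  State := Var → Val
  init := fun _ => 0
  step := SCMStep Proc Var Val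

inductive TSOStep [DecidableEq Proc] [DecidableEq Var] :
    (Var → Val) × (Proc → List (Var × Val)) → Option (MemEv Proc Var Val) →
      (Var → Val) × (Proc → List (Var × Val)) → Prop where
  | write (m : Var → Val) (b : Proc → List (Var × Val)) (p : Proc) (x : Var) (v : Val) :
      TSOStep (m, b) (some ⟨p, MemAct.write x v⟩)
        (m, Function.update b p (b p ++ [(x, v)]))
  | readBuffer (m : Var → Val) (b : Proc → List (Var × Val)) (p : Proc) (x : Var) (v : Val) :
      ((b p).filter (fun pr => decide (pr.1 = x))).getLast? = some (x, v) →
      TSOStep (m, b) (some ⟨p, MemAct.read x v⟩) (m, b)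
  | readMemory (m : Var → Val) (b : Proc → List (Var × Val)) (p : Proc) (x : Var) :
      (b p).filter (fun pr => decide (pr.1 = x)) = [] →
      TSOStep (m, b) (some ⟨p, MemAct.read x (m x)⟩) (m, b)
  | rmw (m : Var → Val) (b : Proc → List (Var × Val)) (p : Proc) (x : Var) (vnew : Val) :
      b p = [] →
      TSOStep (m, b) (some ⟨p, MemAct.rmw x (m x) vnew⟩) (Function.update m x vnew, b)
  | fence (m : Var → Val) (b : Proc → List (Var × Val)) (p : Proc) :
      b p = [] → TSOStep (m, b) (some ⟨p, MemAct.fence⟩) (m, b)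
  | propagate (m : Var → Val) (b : Proc → List (Var × Val)) (p : Proc) (x : Var) (v : Val)
      (β : List (Var × Val)) :
      b p = (x, v) :: β →
      TSOStep (m, b) none (Function.update m x v, Function.update b p β)

def TSOModel [DecidableEq Proc] [DecidableEq Var] [Zero Val] : MemModel Proc Var Val where
  State := (Var → Val) × (Proc → List (Var × Val))
  init := (fun _ => 0, fun _ => [])
  step := TSOStep Proc Var Val

/-- A message of the RA memory model. -/
structure RAMsg (Var Val : Type) : Type where
  var : Var
  val : Val
  time : ℕ
  view : Var → ℕ

structure RAState (Proc Var Val : Type) : Type where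
  mem : Set (RAMsg Var Val)
  view : Proc → Var → ℕ
  fview : Var → ℕ

end Models

/-- Pointwise join (maximum) of two views. -/
def viewJoin {Var : Type} (V1 V2 : Var → ℕ) : Var → ℕ := fun y => max (V1 y) (V2 y)

section RA

variable (Proc Var Val : Type)

inductive RAStep [DecidableEq Proc] [DecidableEq Var] :
    RAState Proc Var Val → Option (MemEv Proc Var Val) → RAState Proc Var Val → Prop where
  | write (s : RAState Proc Var Val) (p : Proc) (x : Var) (v : Val) (t : ℕ) :
      s.view p x < t →
      (∀ μ ∈ s.mem, μ.var = x → μ.time ≠ t) →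
      RAStep s (some ⟨p, MemAct.write x v⟩)
        ⟨insert ⟨x, v, t, Function.update (s.view p) x t⟩ s.mem,
         Function.update s.view p (Function.update (s.view p) x t), s.fview⟩
  | read (s : RAState Proc Var Val) (p : Proc) (x : Var) (v : Val) (V : Var → ℕ) :
      (⟨x, v, s.view p x, V⟩ : RAMsg Var Val) ∈ s.mem →
      RAStep s (some ⟨p, MemAct.read x v⟩) s
  | rmw (s : RAState Proc Var Val) (p : Proc) (x : Var) (vexp vnew : Val) (V : Var → ℕ) :
      (⟨x, vexp, s.view p x, V⟩ : RAMsg Var Val) ∈ s.mem →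
      (∀ μ ∈ s.mem, μ.var = x → μ.time ≠ s.view p x + 1) →
      RAStep s (some ⟨p, MemAct.rmw x vexp vnew⟩)
        ⟨insert ⟨x, vnew, s.view p x + 1, Function.update (s.view p) x (s.view p x + 1)⟩ s.mem,
         Function.update s.view p (Function.update (s.view p) x (s.view p x + 1)), s.fview⟩
  | fence (s : RAState Proc Var Val) (p : Proc) :
      RAStep s (some ⟨p, MemAct.fence⟩)
        ⟨s.mem, Function.update s.view p (viewJoin (s.view p) s.fview),
         viewJoin (s.view p) s.fview⟩
  | propagate (s : RAState Proc Var Val) (p : Proc) (μ : RAMsg Var Val) :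
      μ ∈ s.mem → s.view p μ.var < μ.time →
      RAStep s none
        ⟨s.mem, Function.update s.view p (viewJoin (s.view p) μ.view), s.fview⟩

def RAModel [DecidableEq Proc] [DecidableEq Var] [Zero Val] : MemModel Proc Var Val where
  State := RAState Proc Var Val
  init := ⟨{μ | ∃ x : Var, μ = ⟨x, 0, 0, fun _ => 0⟩}, fun _ _ => 0, fun _ => 0⟩
  step := RAStep Proc Var Val

end RA

/-! ### Well-behaved memory models -/

section WellBehaved

variable {Proc Var Val : Type}

/-- Reachability by silent steps. -/
def TauReach (M : MemModel Proc Var Val) : M.State → M.State → Prop :=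
  Relation.ReflTransGen (fun q q' => M.step q none q')

/-- A memory model is well-behaved if there is a simulation from SCM into its stable states. -/
def WellBehaved [DecidableEq Var] [Zero Val] (M : MemModel Proc Var Val) : Prop :=
  ∃ R : (Var → Val) → M.State → Prop,
    (∀ m q, R m q → M.Stable q) ∧
    R (fun _ => (0 : Val)) M.init ∧
    (∀ m q, R m q → ∀ (l : Option (MemEv Proc Var Val)) (m' : Var → Val),
      SCMStep Proc Var Val m l m' →
      ∃ q1 q' : M.State, M.step q l q1 ∧ TauReach M q1 q' ∧ M.Stable q' ∧ R m' q')

end WellBehaved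

/-! ### Patterns of observable memory sequences -/

section Patterns

variable {Proc Var Val : Type}

def IsSolo (σ : List (MemEv Proc Var Val)) : Prop :=
  ∀ e ∈ σ, ∀ e' ∈ σ, MemEv.proc e = MemEv.proc e'

def IsRW (σ : List (MemEv Proc Var Val)) : Prop :=
  ∀ e ∈ σ, MemEv.isWrite e ∨ MemEv.isRead e

def IsRWF (σ : List (MemEv Proc Var Val)) : Prop :=
  ∀ e ∈ σ, MemEv.isWrite e ∨ MemEv.isRead e ∨ MemEv.isFence e

/-- Read-before-write: no read-after-write pattern on distinct variables. -/
def IsRBW (σ : List (MemEv Proc Var Val)) : Prop :=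
  ∀ (k1 k2 : ℕ) (e1 e2 : MemEv Proc Var Val) (x y : Var) (v w : Val),
    k1 < k2 → σ[k1]? = some e1 → σ[k2]? = some e2 →
    e1.act = MemAct.write x v → e2.act = MemAct.read y w → x ≠ y →
    ∃ (k : ℕ) (e : MemEv Proc Var Val) (u : Val),
      k1 < k ∧ k < k2 ∧ σ[k]? = some e ∧ e.act = MemAct.write y u

/-- Trailing-fence: no fence is immediately followed by a non-fence event. -/
def IsTF (σ : List (MemEv Proc Var Val)) : Prop :=
  ∀ (k : ℕ) (e e' : MemEv Proc Var Val),
    σ[k]? = some e → σ[k + 1]? = some e' → MemEv.isFence e → MemEv.isFence e'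

/-- Leading-fence: no fence is immediately preceded by a non-fence event. -/
def IsLF (σ : List (MemEv Proc Var Val)) : Prop :=
  ∀ (k : ℕ) (e e' : MemEv Proc Var Val),
    σ[k]? = some e → σ[k + 1]? = some e' → MemEv.isFence e' → MemEv.isFence e

def IsLTF (σ : List (MemEv Proc Var Val)) : Prop :=
  ∃ σ' σ'' : List (MemEv Proc Var Val), σ = σ' ++ σ'' ∧ IsLF σ' ∧ IsTF σ''

def IsPPTF [DecidableEq Proc] (σ : List (MemEv Proc Var Val)) : Prop :=
  ∀ p : Proc, IsTF (σ.filter (fun e => decide (e.proc = p)))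

def IsPPLF [DecidableEq Proc] (σ : List (MemEv Proc Var Val)) : Prop :=
  ∀ p : Proc, IsLF (σ.filter (fun e => decide (e.proc = p)))

end Patterns

/-! ### Objects, events and histories -/

inductive ObjAct (Op Ret : Type) : Type where
  | inv (o : Op)
  | res (u : Ret)

structure ObjEv (Proc Op Ret : Type) : Type where
  proc : Proc
  act : ObjAct Op Ret

inductive EvAct (Var Val Op Ret : Type) : Type where
  | mem (a : MemAct Var Val)
  | inv (o : Op)
  | res (u : Ret)

/-- A general event: a memory event or an object event of some process. -/
structure Ev (Proc Var Val Op Ret : Type) : Type where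
  proc : Proc
  act : EvAct Var Val Op Ret

section Events

variable {Proc Var Val Op Ret : Type}

def ObjAct.isInv : ObjAct Op Ret → Prop
  | ObjAct.inv _ => True
  | _ => False

def ObjAct.isRes : ObjAct Op Ret → Prop
  | ObjAct.res _ => True
  | _ => False

def Ev.toMem : Ev Proc Var Val Op Ret → Option (MemEv Proc Var Val)
  | ⟨p, EvAct.mem a⟩ => some ⟨p, a⟩
  | _ => none

def Ev.toObj : Ev Proc Var Val Op Ret → Option (ObjEv Proc Op Ret)
  | ⟨p, EvAct.inv o⟩ => some ⟨p, ObjAct.inv o⟩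
  | ⟨p, EvAct.res u⟩ => some ⟨p, ObjAct.res u⟩
  | _ => none

/-- Restriction of an event sequence to its memory events. -/
def restrictMem (π : List (Ev Proc Var Val Op Ret)) : List (MemEv Proc Var Val) :=
  π.filterMap Ev.toMem

/-- Restriction of an event sequence to its object events. -/
def restrictObj (π : List (Ev Proc Var Val Op Ret)) : List (ObjEv Proc Op Ret) :=
  π.filterMap Ev.toObj

def procsEv (π : List (Ev Proc Var Val Op Ret)) : Set Proc := {p | ∃ e ∈ π, Ev.proc e = p}

def procsObj (h : List (ObjEv Proc Op Ret)) : Set Proc := {p | ∃ e ∈ h, ObjEv.proc e = p}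

def Ev.isWriteEv (e : Ev Proc Var Val Op Ret) : Prop :=
  ∃ x v, e.act = EvAct.mem (MemAct.write x v)

def Ev.isReadEv (e : Ev Proc Var Val Op Ret) : Prop :=
  ∃ x v, e.act = EvAct.mem (MemAct.read x v)

def Ev.isResEv (e : Ev Proc Var Val Op Ret) : Prop := ∃ u, e.act = EvAct.res u

def Ev.isFenceEv (e : Ev Proc Var Val Op Ret) : Prop := e.act = EvAct.mem MemAct.fence

/-- The two-event history `⟨p : o ⇒ u⟩`. -/
def invres (p : Proc) (o : Op) (u : Ret) : List (ObjEv Proc Op Ret) :=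
  [⟨p, ObjAct.inv o⟩, ⟨p, ObjAct.res u⟩]

/-- Complete sequential histories: concatenations of matching invocation–response pairs. -/
inductive CompleteSeq : List (ObjEv Proc Op Ret) → Prop where
  | nil : CompleteSeq []
  | cons (p : Proc) (o : Op) (u : Ret) {h : List (ObjEv Proc Op Ret)} :
      CompleteSeq h → CompleteSeq (⟨p, ObjAct.inv o⟩ :: ⟨p, ObjAct.res u⟩ :: h)

/-- Sequential histories: prefixes of complete sequential histories. -/
def Sequential (h : List (ObjEv Proc Op Ret)) : Prop :=
  ∃ h' : List (ObjEv Proc Op Ret), CompleteSeq h' ∧ h <+: h'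

def WellFormed [DecidableEq Proc] (h : List (ObjEv Proc Op Ret)) : Prop :=
  ∀ p : Proc, Sequential (h.filter (fun e => decide (e.proc = p)))

/-- Complete histories: well-formed, and each process's restriction is empty or
ends with a response event. -/
def CompleteH [DecidableEq Proc] (h : List (ObjEv Proc Op Ret)) : Prop :=
  WellFormed h ∧
    ∀ p : Proc, h.filter (fun e => decide (e.proc = p)) = [] ∨
      ∃ e : ObjEv Proc Op Ret,
        (h.filter (fun e => decide (e.proc = p))).getLast? = some e ∧ e.act.isRes

end Events

/-! ### Reorderings and linearization -/

/-- `Reorder R s s'` : `s'` is an `R`-reordering of `s`. -/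
def Reorder {α : Type u} (R : α → α → Prop) (s s' : List α) : Prop :=
  ∃ f : Fin s.length ≃ Fin s'.length,
    (∀ i : Fin s.length, s'.get (f i) = s.get i) ∧
    ∀ i j : Fin s.length, i < j → R (s.get i) (s.get j) → f i < f j

section Lin

variable {Proc Var Val Op Ret : Type}

/-- The `sproc` relation on general events: same process. -/
def sprocEv (e1 e2 : Ev Proc Var Val Op Ret) : Prop := e1.proc = e2.proc

/-- The `lin` relation on object events. -/
def linRel (e1 e2 : ObjEv Proc Op Ret) : Prop :=
  e1.proc = e2.proc ∨ (e1.act.isRes ∧ e2.act.isInv)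

/-- `h ⊑ H'`: some history in `H'` linearizes `h`. -/
def LinInto (Spec : Set (List (ObjEv Proc Op Ret))) (h : List (ObjEv Proc Op Ret)) : Prop :=
  ∃ h' ∈ Spec, Reorder linRel h h'

/-- A specification: a prefix-closed set of complete sequential histories. -/
def IsSpec (Spec : Set (List (ObjEv Proc Op Ret))) : Prop :=
  (∀ h ∈ Spec, CompleteSeq h) ∧
  (∀ h ∈ Spec, ∀ h' : List (ObjEv Proc Op Ret), h' <+: h → CompleteSeq h' → h' ∈ Spec)

/-- A deterministic object: no two specification histories have a longest common prefix
ending with an invocation. -/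
def Deterministic (Spec : Set (List (ObjEv Proc Op Ret))) : Prop :=
  ∀ h1 ∈ Spec, ∀ h2 ∈ Spec, ∀ (g : List (ObjEv Proc Op Ret)) (p : Proc) (o : Op),
    (g ++ [⟨p, ObjAct.inv o⟩]) <+: h1 → (g ++ [⟨p, ObjAct.inv o⟩]) <+: h2 →
    ∃ e : ObjEv Proc Op Ret,
      (g ++ [⟨p, ObjAct.inv o⟩, e]) <+: h1 ∧ (g ++ [⟨p, ObjAct.inv o⟩, e]) <+: h2

def WeaklySpecMergeableAfter (Spec : Set (List (ObjEv Proc Op Ret)))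
    (h0 h1 h2 : List (ObjEv Proc Op Ret)) : Prop :=
  LinInto Spec (h0 ++ h1) → LinInto Spec (h0 ++ h2) →
    ∃ h, Shuffle h1 h2 h ∧ LinInto Spec (h0 ++ h)

def StronglySpecMergeableAfter (Spec : Set (List (ObjEv Proc Op Ret)))
    (h0 h1 h2 : List (ObjEv Proc Op Ret)) : Prop :=
  LinInto Spec (h0 ++ h1) → LinInto Spec (h0 ++ h2) →
    ∀ h, Shuffle h1 h2 h → LinInto Spec (h0 ++ h)

def SpecMergeableAfter (strong : Bool) (Spec : Set (List (ObjEv Proc Op Ret)))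
    (h0 h1 h2 : List (ObjEv Proc Op Ret)) : Prop :=
  if strong then StronglySpecMergeableAfter Spec h0 h1 h2
  else WeaklySpecMergeableAfter Spec h0 h1 h2

/-- One-sided non-commutativity. -/
def OneSidedNonComm (Spec : Set (List (ObjEv Proc Op Ret))) (o1 o2 : Op) : Prop :=
  ∃ (h0 : List (ObjEv Proc Op Ret)) (p1 p2 : Proc) (u1 v1 u2 : Ret),
    CompleteSeq h0 ∧ p1 ≠ p2 ∧ u1 ≠ v1 ∧
    h0 ++ invres p1 o1 u1 ∈ Spec ∧
    h0 ++ invres p2 o2 u2 ++ invres p1 o1 v1 ∈ Spec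

/-- Two-sided non-commutativity. -/
def TwoSidedNonComm (Spec : Set (List (ObjEv Proc Op Ret))) (o1 o2 : Op) : Prop :=
  ∃ (h0 : List (ObjEv Proc Op Ret)) (p1 p2 : Proc) (u1 v1 u2 v2 : Ret),
    CompleteSeq h0 ∧ p1 ≠ p2 ∧ u1 ≠ v1 ∧ u2 ≠ v2 ∧
    h0 ++ invres p1 o1 u1 ++ invres p2 o2 v2 ∈ Spec ∧
    h0 ++ invres p2 o2 u2 ++ invres p1 o1 v1 ∈ Spec

end Lin

/-! ### Implementations -/

/-- An implementation of an operation for a process `p`: an LTS labeled by events of `p`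
in which a response event is always the last transition. -/
structure OpImpl (Proc Var Val Op Ret : Type) (p : Proc) : Type 1 where
  State : Type
  init : State
  step : State → Ev Proc Var Val Op Ret → State → Prop
  proc_eq : ∀ q e q', step q e q' → Ev.proc e = p
  res_final : ∀ (q : State) (u : Ret) (q' : State),
    step q ⟨p, EvAct.res u⟩ q' → ∀ e q'', ¬ step q' e q''

section Impl

variable {Proc Var Val Op Ret : Type}

def OpImpl.traces {p : Proc} (Iop : OpImpl Proc Var Val Op Ret p) :
    Set (List (Ev Proc Var Val Op Ret)) :=
  {π | ∃ q : Iop.State, LTSPath Iop.step Iop.init π q}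

/-- An implementation of an object. -/
def Impl (Proc Var Val Op Ret : Type) : Type 1 :=
  (o : Op) → (p : Proc) → OpImpl Proc Var Val Op Ret p

/-- Per-process states of the system induced by an implementation: `none` is idle. -/
def SIPState (I : Impl Proc Var Val Op Ret) (p : Proc) : Type :=
  Option ((o : Op) × (I o p).State)

/-- Per-process transitions of the system induced by an implementation. -/
inductive SIPStep (I : Impl Proc Var Val Op Ret) (p : Proc) :
    SIPState I p → Ev Proc Var Val Op Ret → SIPState I p → Prop where
  | invoke (o : Op) :
      SIPStep I p none ⟨p, EvAct.inv o⟩ (some ⟨o, (I o p).init⟩)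
  | memStep {o : Op} {q q' : (I o p).State} (a : MemAct Var Val) :
      (I o p).step q ⟨p, EvAct.mem a⟩ q' →
      SIPStep I p (some ⟨o, q⟩) ⟨p, EvAct.mem a⟩ (some ⟨o, q'⟩)
  | resStep {o : Op} {q q' : (I o p).State} (u : Ret) :
      (I o p).step q ⟨p, EvAct.res u⟩ q' →
      SIPStep I p (some ⟨o, q⟩) ⟨p, EvAct.res u⟩ none

def SIState (I : Impl Proc Var Val Op Ret) : Type :=
  (p : Proc) → SIPState I p

/-- The system induced by an implementation interleaves the processes. -/
inductive SIStep [DecidableEq Proc] (I : Impl Proc Var Val Op Ret) :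
    SIState I → Ev Proc Var Val Op Ret → SIState I → Prop where
  | mk (s : SIState I) (p : Proc) (e : Ev Proc Var Val Op Ret) (t : SIPState I p) :
      SIPStep I p (s p) e t → SIStep I s e (Function.update s p t)

def ImplTraces [DecidableEq Proc] (I : Impl Proc Var Val Op Ret) :
    Set (List (Ev Proc Var Val Op Ret)) :=
  {π | ∃ s : SIState I, LTSPath (SIStep I) (fun _ => none) π s}

/-- Histories generated by `I` after `π0` under memory model `M`. -/
def GenHist [DecidableEq Proc] (π0 : List (Ev Proc Var Val Op Ret))
    (I : Impl Proc Var Val Op Ret) (M : MemModel Proc Var Val) :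
    Set (List (ObjEv Proc Op Ret)) :=
  {h | ∃ π : List (Ev Proc Var Val Op Ret),
      π0 ++ π ∈ ImplTraces I ∧ restrictObj π = h ∧
      restrictMem (π0 ++ π) ∈ M.OTraces M.init}

/-- Consistency: every complete generated history linearizes into the specification. -/
def Consistent [DecidableEq Proc] (I : Impl Proc Var Val Op Ret)
    (M : MemModel Proc Var Val) (Spec : Set (List (ObjEv Proc Op Ret))) : Prop :=
  ∀ h ∈ GenHist [] I M, CompleteH h → LinInto Spec h

/-- Availability after `h0` w.r.t. `h`. -/
def AvailableAfter [DecidableEq Proc] [DecidableEq Var] [Zero Val]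
    (I : Impl Proc Var Val Op Ret) (h0 h : List (ObjEv Proc Op Ret)) : Prop :=
  ∀ π0 ∈ ImplTraces I,
    restrictMem π0 ∈ (SCMModel Proc Var Val).OTraces (SCMModel Proc Var Val).init →
    restrictObj π0 = h0 →
    h ∈ GenHist π0 I (SCMModel Proc Var Val)

def SpecAvailable [DecidableEq Proc] [DecidableEq Var] [Zero Val]
    (I : Impl Proc Var Val Op Ret) (Spec : Set (List (ObjEv Proc Op Ret))) : Prop :=
  ∀ h0 h : List (ObjEv Proc Op Ret), CompleteSeq h0 → CompleteSeq h →
    h0 ++ h ∈ Spec → AvailableAfter I h0 h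

end Impl

/-! ### Fence insertion -/

section Fence

variable {Proc Var Val Op Ret : Type}

/-- `FenceInsertion π π'` : `π'` is obtained from `π` by inserting fence events. -/
inductive FenceInsertion : List (Ev Proc Var Val Op Ret) → List (Ev Proc Var Val Op Ret) → Prop where
  | nil : FenceInsertion [] []
  | keep (e : Ev Proc Var Val Op Ret) {π π' : List (Ev Proc Var Val Op Ret)} :
      FenceInsertion π π' → FenceInsertion (e :: π) (e :: π')
  | fence (p : Proc) {π π' : List (Ev Proc Var Val Op Ret)} :
      FenceInsertion π π' → FenceInsertion π (⟨p, EvAct.mem MemAct.fence⟩ :: π')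

/-- Every write is separated from every later read or response by a fence. -/
def FencedWrites (π : List (Ev Proc Var Val Op Ret)) : Prop :=
  ∀ (i j : ℕ) (ei ej : Ev Proc Var Val Op Ret),
    i < j → π[i]? = some ei → π[j]? = some ej →
    Ev.isWriteEv ei → (Ev.isReadEv ej ∨ Ev.isResEv ej) →
    ∃ (k : ℕ) (ek : Ev Proc Var Val Op Ret),
      i < k ∧ k < j ∧ π[k]? = some ek ∧ Ev.isFenceEv ek

/-- Histories generated by `I` under `M` (from the initial state). -/
def GeneratedHistories [DecidableEq Proc] (I : Impl Proc Var Val Op Ret)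
    (M : MemModel Proc Var Val) : Set (List (ObjEv Proc Op Ret)) :=
  {h | ∃ π ∈ ImplTraces I, restrictObj π = h ∧ restrictMem π ∈ M.OTraces M.init}

end Fence

/-! ### The snapshot object -/

inductive SnapOp (W : Type) : Type where
  | update (w : W)
  | scan

inductive SnapRet (Proc W : Type) : Type where
  | ack
  | vec (v : Proc → Option W)

section Snapshot

variable {Proc W : Type}

/-- The sequential specification of the single-writer snapshot object, threaded
through the current contents `s`. -/
inductive SnapSpecFrom [DecidableEq Proc] :
    (Proc → Option W) → List (ObjEv Proc (SnapOp W) (SnapRet Proc W)) → Prop where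
  | nil (s : Proc → Option W) : SnapSpecFrom s []
  | update (s : Proc → Option W) (p : Proc) (w : W)
      {h : List (ObjEv Proc (SnapOp W) (SnapRet Proc W))} :
      SnapSpecFrom (Function.update s p (some w)) h →
      SnapSpecFrom s (⟨p, ObjAct.inv (SnapOp.update w)⟩ :: ⟨p, ObjAct.res SnapRet.ack⟩ :: h)
  | scan (s : Proc → Option W) (p : Proc)
      {h : List (ObjEv Proc (SnapOp W) (SnapRet Proc W))} :
      SnapSpecFrom s h →
      SnapSpecFrom s (⟨p, ObjAct.inv SnapOp.scan⟩ :: ⟨p, ObjAct.res (SnapRet.vec s)⟩ :: h)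

def SnapSpec (Proc W : Type) [DecidableEq Proc] :
    Set (List (ObjEv Proc (SnapOp W) (SnapRet Proc W))) :=
  {h | SnapSpecFrom (fun _ => none) h}

end Snapshot

-- BEGIN HELPERS
section TSOHelpers

set_option linter.unusedSectionVars false

variable {α : Type u} {Proc Var Val : Type} [DecidableEq Proc] [DecidableEq Var]

private lemma LTSPath_append {S : Type u} {L : Type v} {step : S → L → S → Prop}
    {s s' s'' : S} {π1 π2 : List L}
    (h1 : LTSPath step s π1 s') (h2 : LTSPath step s' π2 s'') :
    LTSPath step s (π1 ++ π2) s'' := by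
  induction h1 with
  | nil => simpa using h2
  | cons hstep _ ih => exact LTSPath.cons hstep (ih h2)

private lemma reduceOption_map_some' (σ : List α) : (σ.map some).reduceOption = σ := by
  induction σ with
  | nil => rfl
  | cons a σ ih => simp [List.reduceOption_cons_of_some, ih]

private lemma reduceOption_replicate_none (n : ℕ) :
    (List.replicate n (none : Option α)).reduceOption = [] := by
  induction n with
  | zero => rfl
  | succ n ih => simpa [List.replicate] using ih

/-! Shuffle lemmas -/

private lemma shuffle_nil_right (s : List α) : Shuffle s [] s := by
  induction s using List.reverseRecOn with
  | nil => exact Shuffle.nil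
  | append_singleton t x ih => exact Shuffle.left x ih

private lemma shuffle_append_left {s1 s2 s : List α} (h : Shuffle s1 s2 s) (t : List α) :
    Shuffle (s1 ++ t) s2 (s ++ t) := by
  induction t using List.reverseRecOn with
  | nil => simpa using h
  | append_singleton t x ih =>
    rw [← List.append_assoc, ← List.append_assoc]
    exact Shuffle.left x ih

private lemma shuffle_append_right {s1 s2 s : List α} (h : Shuffle s1 s2 s) (t : List α) :
    Shuffle s1 (s2 ++ t) (s ++ t) := by
  induction t using List.reverseRecOn with
  | nil => simpa using h
  | append_singleton t x ih =>
    rw [← List.append_assoc, ← List.append_assoc]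
    exact Shuffle.right x ih

private lemma shuffle_nil_left (s : List α) : Shuffle [] s s := by
  simpa using shuffle_append_right (Shuffle.nil (α := α)) s

/-! LF / TF decomposition -/

private lemma isLF_tail {e : MemEv Proc Var Val} {σ : List (MemEv Proc Var Val)}
    (h : IsLF (e :: σ)) : IsLF σ := by
  intro k e1 e2 h1 h2 hf
  exact h (k + 1) e1 e2 (by simpa using h1) (by simpa using h2) hf

private lemma isTF_tail {e : MemEv Proc Var Val} {σ : List (MemEv Proc Var Val)}
    (h : IsTF (e :: σ)) : IsTF σ := by
  intro k e1 e2 h1 h2 hf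
  exact h (k + 1) e1 e2 (by simpa using h1) (by simpa using h2) hf

private lemma lf_decomp : ∀ σ : List (MemEv Proc Var Val), IsLF σ →
    ∃ F A, σ = F ++ A ∧ (∀ e ∈ F, MemEv.isFence e) ∧ (∀ e ∈ A, ¬ MemEv.isFence e) := by
  intro σ
  induction σ with
  | nil => exact fun _ => ⟨[], [], rfl, by simp, by simp⟩
  | cons e σ ih =>
    intro h
    obtain ⟨F, A, hσ, hF, hA⟩ := ih (isLF_tail h)
    by_cases hf : MemEv.isFence e
    · refine ⟨e :: F, A, by rw [hσ]; rfl, ?_, hA⟩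
      intro e' he'
      rcases List.mem_cons.mp he' with rfl | he'
      · exact hf
      · exact hF _ he'
    · refine ⟨[], e :: σ, rfl, by simp, ?_⟩
      rcases F with _ | ⟨f, F'⟩
      · intro e' he'
        rcases List.mem_cons.mp he' with rfl | he'
        · exact hf
        · exact hA _ (by simpa [hσ] using he')
      · exfalso
        exact hf (h 0 e f (by simp) (by rw [hσ]; simp) (hF f (by simp)))
  
private lemma tf_decomp : ∀ σ : List (MemEv Proc Var Val), IsTF σ →
    ∃ B F, σ = B ++ F ∧ (∀ e ∈ B, ¬ MemEv.isFence e) ∧ (∀ e ∈ F, MemEv.isFence e) := by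
  intro σ
  induction σ with
  | nil => exact fun _ => ⟨[], [], rfl, by simp, by simp⟩
  | cons e σ ih =>
    intro h
    obtain ⟨B, F, hσ, hB, hF⟩ := ih (isTF_tail h)
    by_cases hf : MemEv.isFence e
    · refine ⟨[], e :: σ, rfl, by simp, ?_⟩
      rcases B with _ | ⟨b, B'⟩
      · intro e' he'
        rcases List.mem_cons.mp he' with rfl | he'
        · exact hf
        · exact hF _ (by simpa [hσ] using he')
      · exact absurd (h 0 e b (by simp) (by rw [hσ]; simp) hf) (hB b (by simp))
    · refine ⟨e :: B, F, by rw [hσ]; rfl, ?_, hF⟩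
      intro e' he'
      rcases List.mem_cons.mp he' with rfl | he'
      · exact hf
      · exact hB _ he'

end TSOHelpers

section TSOHelpers2

set_option linter.unusedSectionVars false

variable {Proc Var Val : Type} [DecidableEq Proc] [DecidableEq Var]

private def lastVal (l : List (Var × Val)) (x : Var) : Option Val :=
  ((l.filter (fun pr => decide (pr.1 = x))).getLast?).map Prod.snd

private def effF (m : Var → Val) (l : List (Var × Val)) : Var → Val :=
  fun x => (lastVal l x).getD (m x)

private lemma effF_nil (m : Var → Val) : effF m [] = m := by
  funext x; rfl

private lemma effF_append_single (m : Var → Val) (l : List (Var × Val)) (x : Var) (v : Val) :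
    effF m (l ++ [(x, v)]) = Function.update (effF m l) x v := by
  funext y
  unfold effF lastVal
  rw [List.filter_append]
  by_cases hxy : x = y
  · subst hxy
    simp [List.getLast?_concat, Function.update_self]
  · simp [hxy, Function.update_of_ne (Ne.symm hxy)]

private lemma effF_flush (m : Var → Val) (x : Var) (v : Val) (β : List (Var × Val)) :
    effF (Function.update m x v) β = effF m ((x, v) :: β) := by
  funext y
  unfold effF lastVal
  rcases hfl : β.filter (fun pr => decide (pr.1 = y)) with _ | ⟨a, fl'⟩
  · by_cases hxy : x = y
    · subst hxy
      simp [List.filter_cons, hfl, Function.update_self]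
    · simp [List.filter_cons, hxy, hfl, Function.update_of_ne (Ne.symm hxy)]
  · have hne : β.filter (fun pr => decide (pr.1 = y)) ≠ [] := by rw [hfl]; simp
    by_cases hxy : x = y
    · subst hxy
      rw [List.filter_cons_of_pos (by simp), hfl, List.getLast?_cons_cons]
      rcases hgl : (a :: fl').getLast? with _ | z
      · exact absurd (List.getLast?_eq_none_iff.mp hgl) (by simp)
      · simp
    · rw [List.filter_cons_of_neg (by simpa using hxy), hfl]
      rcases hgl : (a :: fl').getLast? with _ | z
      · exact absurd (List.getLast?_eq_none_iff.mp hgl) (by simp)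
      · simp

private def writesOf (σ : List (MemEv Proc Var Val)) : List (Var × Val) :=
  σ.filterMap (fun e => match e.act with
    | MemAct.write x v => some (x, v)
    | _ => none)

private def ReadsOK (ε : Var → Val) : List (MemEv Proc Var Val) → Prop
  | [] => True
  | e :: σ =>
    match e.act with
    | MemAct.write x v => ReadsOK (Function.update ε x v) σ
    | MemAct.read x v => v = ε x ∧ ReadsOK ε σ
    | MemAct.fence => ReadsOK ε σ
    | MemAct.rmw _ _ _ => False

private lemma readsOK_dropF {ε : Var → Val} :
    ∀ {Fs σ : List (MemEv Proc Var Val)}, (∀ e ∈ Fs, MemEv.isFence e) →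
      ReadsOK ε (Fs ++ σ) → ReadsOK ε σ := by
  intro Fs
  induction Fs with
  | nil => exact fun _ h => h
  | cons f Fs ih =>
    intro σ hF h
    have hf : f.act = MemAct.fence := hF f (by simp)
    obtain ⟨q, a⟩ := f
    simp only at hf
    subst hf
    exact ih (fun e he => hF e (by simp [he])) h

private lemma readsOK_append_left {σa : List (MemEv Proc Var Val)} :
    ∀ {ε : Var → Val} {σb : List (MemEv Proc Var Val)},
      ReadsOK ε (σa ++ σb) → ReadsOK ε σa := by
  induction σa with
  | nil => exact fun _ => trivial
  | cons e σa ih =>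
    intro ε σb h
    obtain ⟨q, a⟩ := e
    cases a with
    | write x v => exact ih (by simpa [ReadsOK] using h)
    | read x v =>
      obtain ⟨hv, h'⟩ : v = ε x ∧ ReadsOK ε (σa ++ σb) := by simpa [ReadsOK] using h
      exact ⟨hv, ih h'⟩
    | fence => exact ih (by simpa [ReadsOK] using h)
    | rmw x u w => exact absurd h (by simp [ReadsOK])

/-- Soundness: read values along a solo-`p` TSO path are determined. -/
private lemma readsOK_of_path (p : Proc) :
    ∀ {π : List (Option (MemEv Proc Var Val))}
      {s s' : (Var → Val) × (Proc → List (Var × Val))},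
      LTSPath (TSOStep Proc Var Val) s π s' →
      (∀ e ∈ π.reduceOption, MemEv.proc e = p ∧ ¬ MemEv.isRMW e) →
      (∀ q, q ≠ p → s.2 q = []) →
      ReadsOK (effF s.1 (s.2 p)) π.reduceOption := by
  intro π s s' hpath
  induction hpath with
  | nil => intro _ _; trivial
  | @cons s s1 s'' l ls hstep hrest ih =>
    intro hev hbuf
    cases hstep with
    | write m b q x v =>
      have hq : p = q := ((hev ⟨q, MemAct.write x v⟩ (by simp [List.reduceOption_cons_of_some])).1).symm
      subst hq
      simp only [List.reduceOption_cons_of_some, ReadsOK]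
      rw [← effF_append_single, ← Function.update_self p (b p ++ [(x, v)]) b]
      exact ih (fun e he => hev e (by simp [List.reduceOption_cons_of_some, he]))
        (fun q hq => by simpa [Function.update_of_ne hq] using hbuf q hq)
    | readBuffer m b q x v hlast =>
      have hq : p = q := ((hev ⟨q, MemAct.read x v⟩ (by simp [List.reduceOption_cons_of_some])).1).symm
      subst hq
      simp only [List.reduceOption_cons_of_some, ReadsOK]
      constructor
      · show v = effF m (b p) x
        unfold effF lastVal
        rw [hlast]
        rfl
      · exact ih (fun e he => hev e (by simp [List.reduceOption_cons_of_some, he])) hbuf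
    | readMemory m b q x hfl =>
      have hq : p = q := ((hev ⟨q, MemAct.read x (m x)⟩ (by simp [List.reduceOption_cons_of_some])).1).symm
      subst hq
      simp only [List.reduceOption_cons_of_some, ReadsOK]
      constructor
      · show m x = effF m (b p) x
        unfold effF lastVal
        rw [hfl]
        rfl
      · exact ih (fun e he => hev e (by simp [List.reduceOption_cons_of_some, he])) hbuf
    | rmw m b q x vnew hbp =>
      exact absurd ⟨x, m x, vnew, rfl⟩
        (hev ⟨q, MemAct.rmw x (m x) vnew⟩ (by simp [List.reduceOption_cons_of_some])).2
    | fence m b q hbp =>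
      simp only [List.reduceOption_cons_of_some, ReadsOK]
      exact ih (fun e he => hev e (by simp [List.reduceOption_cons_of_some, he])) hbuf
    | propagate m b q x v β hbq =>
      have hq : p = q := by
        by_contra hqp
        have h2 : b q = [] := hbuf q (fun h => hqp h.symm)
        rw [h2] at hbq
        cases hbq
      subst hq
      simp only [List.reduceOption_cons_of_none]
      have this2 : ReadsOK (effF (Function.update m x v) (Function.update b p β p))
          ls.reduceOption :=
        ih (fun e he => hev e (by simpa [List.reduceOption_cons_of_none] using he))
          (fun q hq => by simpa [Function.update_of_ne hq] using hbuf q hq)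
      rwa [Function.update_self, effF_flush, ← hbq] at this2

/-- Completeness: a fence-free solo-`p` read/write sequence with correct reads runs with no τ. -/
private lemma run_of_readsOK (p : Proc) :
    ∀ (σ : List (MemEv Proc Var Val)),
      (∀ e ∈ σ, MemEv.proc e = p ∧ (MemEv.isWrite e ∨ MemEv.isRead e)) →
      ∀ (m : Var → Val) (b : Proc → List (Var × Val)),
      ReadsOK (effF m (b p)) σ →
      LTSPath (TSOStep Proc Var Val) (m, b) (σ.map some)
        (m, Function.update b p (b p ++ writesOf σ)) := by
  intro σ
  induction σ with
  | nil =>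
    intro _ m b _
    simp only [writesOf, List.filterMap_nil, List.append_nil, Function.update_eq_self,
      List.map_nil]
    exact LTSPath.nil _
  | cons e σ ih =>
    intro hev m b hro
    obtain ⟨q, a⟩ := e
    have hq : p = q := ((hev ⟨q, a⟩ (by simp)).1).symm
    subst hq
    cases a with
    | write x v =>
      have hro' : ReadsOK (effF m ((Function.update b p (b p ++ [(x, v)])) p)) σ := by
        rw [Function.update_self, effF_append_single]
        simpa [ReadsOK] using hro
      have step1 : TSOStep Proc Var Val (m, b) (some ⟨p, MemAct.write x v⟩)
          (m, Function.update b p (b p ++ [(x, v)])) := TSOStep.write m b p x v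
      have hrest := ih (fun e he => hev e (by simp [he])) m
        (Function.update b p (b p ++ [(x, v)])) hro'
      rw [Function.update_self, Function.update_idem, List.append_assoc] at hrest
      have : writesOf (⟨p, MemAct.write x v⟩ :: σ) = (x, v) :: writesOf σ := by
        simp [writesOf]
      rw [List.map_cons, this]
      exact LTSPath.cons step1 (by simpa using hrest)
    | read x v =>
      obtain ⟨hv, hro'⟩ : v = effF m (b p) x ∧ ReadsOK (effF m (b p)) σ := by
        simpa [ReadsOK] using hro
      have hwrites : writesOf (⟨p, MemAct.read x v⟩ :: σ) = writesOf σ := by simp [writesOf]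
      have hrest := ih (fun e he => hev e (by simp [he])) m b hro'
      have step1 : TSOStep Proc Var Val (m, b) (some ⟨p, MemAct.read x v⟩) (m, b) := by
        rcases hlv : lastVal (b p) x with _ | v'
        · have hfl : (b p).filter (fun pr => decide (pr.1 = x)) = [] := by
            unfold lastVal at hlv
            rcases hgl : ((b p).filter (fun pr => decide (pr.1 = x))).getLast? with _ | a
            · exact List.getLast?_eq_none_iff.mp hgl
            · rw [hgl] at hlv; exact absurd hlv (by simp)
          have hvm : v = m x := by
            rw [hv]; unfold effF; rw [hlv]; rfl
          rw [hvm]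
          exact TSOStep.readMemory m b p x hfl
        · obtain ⟨pr, hpr, hpr2⟩ : ∃ pr, ((b p).filter (fun pr => decide (pr.1 = x))).getLast?
              = some pr ∧ pr.2 = v' := by
            unfold lastVal at hlv
            rcases hgl : ((b p).filter (fun pr => decide (pr.1 = x))).getLast? with _ | a
            · rw [hgl] at hlv; exact absurd hlv (by simp)
            · rw [hgl] at hlv
              exact ⟨a, hgl, by simpa using hlv⟩
          have hpr1 : pr.1 = x := by
            have hmem := List.mem_filter.mp (List.mem_of_getLast? hpr)
            simpa using hmem.2
          have hvv : v = v' := by rw [hv]; unfold effF; rw [hlv]; rfl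
          have : pr = (x, v) := by
            obtain ⟨p1, p2⟩ := pr
            simp only at hpr1 hpr2
            rw [hpr1, hpr2, hvv]
          rw [this] at hpr
          exact TSOStep.readBuffer m b p x v hpr
      rw [List.map_cons, hwrites]
      exact LTSPath.cons step1 hrest
    | rmw x u w =>
      rcases (hev ⟨p, MemAct.rmw x u w⟩ (by simp)).2 with ⟨y, v, h⟩ | ⟨y, v, h⟩ <;>
        simp [MemEv.isWrite, MemEv.isRead] at h
    | fence =>
      rcases (hev ⟨p, MemAct.fence⟩ (by simp)).2 with ⟨y, v, h⟩ | ⟨y, v, h⟩ <;>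
        simp [MemEv.isWrite, MemEv.isRead] at h

end TSOHelpers2

section TSOHelpers3

set_option linter.unusedSectionVars false

variable {Proc Var Val : Type} [DecidableEq Proc] [DecidableEq Var]

/-- Frame lemma: a run not involving `p` still works if `p`'s (empty) buffer is replaced. -/
private lemma frame_path (p : Proc) :
    ∀ {π : List (Option (MemEv Proc Var Val))}
      {s s' : (Var → Val) × (Proc → List (Var × Val))},
      LTSPath (TSOStep Proc Var Val) s π s' →
      (∀ e ∈ π.reduceOption, MemEv.proc e ≠ p) →
      s.2 p = [] →
      ∀ w : List (Var × Val),
        s'.2 p = [] ∧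
        LTSPath (TSOStep Proc Var Val) (s.1, Function.update s.2 p w) π
          (s'.1, Function.update s'.2 p w) := by
  intro π s s' hpath
  induction hpath with
  | nil => exact fun _ hb w => ⟨hb, LTSPath.nil _⟩
  | @cons s s1 s'' l ls hstep hrest ih =>
    intro hev hb w
    cases hstep with
    | write m b q x v =>
      have hqp : q ≠ p := hev ⟨q, MemAct.write x v⟩ (by simp [List.reduceOption_cons_of_some])
      have hb1 : (Function.update b q (b q ++ [(x, v)])) p = [] := by
        rw [Function.update_of_ne (Ne.symm hqp)]; exact hb
      obtain ⟨hfin, hp⟩ := ih (fun e he => hev e (by simp [List.reduceOption_cons_of_some, he]))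
        hb1 w
      refine ⟨hfin, LTSPath.cons ?_ hp⟩
      have := TSOStep.write m (Function.update b p w) q x v
      rwa [Function.update_of_ne hqp, Function.update_comm (Ne.symm hqp)] at this
    | readBuffer m b q x v hlast =>
      have hqp : q ≠ p := hev ⟨q, MemAct.read x v⟩ (by simp [List.reduceOption_cons_of_some])
      obtain ⟨hfin, hp⟩ := ih (fun e he => hev e (by simp [List.reduceOption_cons_of_some, he]))
        hb w
      refine ⟨hfin, LTSPath.cons ?_ hp⟩
      exact TSOStep.readBuffer m (Function.update b p w) q x v
        (by rw [Function.update_of_ne hqp]; exact hlast)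
    | readMemory m b q x hfl =>
      have hqp : q ≠ p := hev ⟨q, MemAct.read x (m x)⟩ (by simp [List.reduceOption_cons_of_some])
      obtain ⟨hfin, hp⟩ := ih (fun e he => hev e (by simp [List.reduceOption_cons_of_some, he]))
        hb w
      refine ⟨hfin, LTSPath.cons ?_ hp⟩
      exact TSOStep.readMemory m (Function.update b p w) q x
        (by rw [Function.update_of_ne hqp]; exact hfl)
    | rmw m b q x vnew hbq =>
      have hqp : q ≠ p := hev ⟨q, MemAct.rmw x (m x) vnew⟩
        (by simp [List.reduceOption_cons_of_some])
      obtain ⟨hfin, hp⟩ := ih (fun e he => hev e (by simp [List.reduceOption_cons_of_some, he]))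
        hb w
      refine ⟨hfin, LTSPath.cons ?_ hp⟩
      exact TSOStep.rmw m (Function.update b p w) q x vnew
        (by rw [Function.update_of_ne hqp]; exact hbq)
    | fence m b q hbq =>
      have hqp : q ≠ p := hev ⟨q, MemAct.fence⟩ (by simp [List.reduceOption_cons_of_some])
      obtain ⟨hfin, hp⟩ := ih (fun e he => hev e (by simp [List.reduceOption_cons_of_some, he]))
        hb w
      refine ⟨hfin, LTSPath.cons ?_ hp⟩
      exact TSOStep.fence m (Function.update b p w) q
        (by rw [Function.update_of_ne hqp]; exact hbq)
    | propagate m b q x v β hbq =>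
      have hqp : q ≠ p := by
        intro h
        subst h
        have hb' : b q = [] := hb
        rw [hb'] at hbq
        cases hbq
      have hb1 : (Function.update b q β) p = [] := by
        rw [Function.update_of_ne (Ne.symm hqp)]; exact hb
      obtain ⟨hfin, hp⟩ := ih (fun e he =>
        hev e (by simpa [List.reduceOption_cons_of_none] using he)) hb1 w
      refine ⟨hfin, LTSPath.cons ?_ hp⟩
      have := TSOStep.propagate m (Function.update b p w) q x v β
        (by rw [Function.update_of_ne hqp]; exact hbq)
      rwa [Function.update_comm (Ne.symm hqp)] at this

/-- Flushing `p`'s buffer with silent steps. -/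
private lemma flush_path (p : Proc) :
    ∀ (w : List (Var × Val)) (m : Var → Val) (b : Proc → List (Var × Val)), b p = w →
      ∃ m', LTSPath (TSOStep Proc Var Val) (m, b) (List.replicate w.length none)
        (m', Function.update b p []) := by
  intro w
  induction w with
  | nil =>
    intro m b hb
    refine ⟨m, ?_⟩
    rw [show Function.update b p [] = b by rw [← hb]; exact Function.update_eq_self p b]
    exact LTSPath.nil _
  | cons xv w ih =>
    intro m b hb
    obtain ⟨x, v⟩ := xv
    have step1 : TSOStep Proc Var Val (m, b) none
        (Function.update m x v, Function.update b p w) :=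
      TSOStep.propagate m b p x v w (by rw [hb])
    obtain ⟨m', hp⟩ := ih (Function.update m x v) (Function.update b p w)
      (Function.update_self p w b)
    rw [Function.update_idem] at hp
    exact ⟨m', LTSPath.cons step1 hp⟩

/-- Running a sequence of fences of `p` when `p`'s buffer is empty. -/
private lemma fence_path (p : Proc) :
    ∀ (σ : List (MemEv Proc Var Val)), (∀ e ∈ σ, MemEv.proc e = p ∧ MemEv.isFence e) →
      ∀ (m : Var → Val) (b : Proc → List (Var × Val)), b p = [] →
        LTSPath (TSOStep Proc Var Val) (m, b) (σ.map some) (m, b) := by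
  intro σ
  induction σ with
  | nil => exact fun _ m b _ => LTSPath.nil _
  | cons e σ ih =>
    intro hev m b hb
    obtain ⟨q, a⟩ := e
    obtain ⟨hq, hf⟩ := hev ⟨q, a⟩ (by simp)
    have hq' : q = p := hq
    have hf' : a = MemAct.fence := hf
    subst hq' hf'
    exact LTSPath.cons (TSOStep.fence m b q hb) (ih (fun e he => hev e (by simp [he])) m b hb)

/-- In a stable TSO state all buffers are empty. -/
private lemma stable_buffers {q0 : (Var → Val) × (Proc → List (Var × Val))}
    (h : ∀ q', ¬ TSOStep Proc Var Val q0 none q') : ∀ q, q0.2 q = [] := by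
  intro q
  rcases hb : q0.2 q with _ | ⟨⟨x, v⟩, β⟩
  · rfl
  · exact absurd (show TSOStep Proc Var Val (q0.1, q0.2) none
      (Function.update q0.1 x v, Function.update q0.2 q β) from
        TSOStep.propagate q0.1 q0.2 q x v β hb) (by
          intro hc
          exact h _ hc)

end TSOHelpers3

-- END HELPERS

/-- every solo-RWF-LTF observable memory sequence `σ1` and every
observable memory sequence `σ2` with disjoint processes are weakly mergeable in TSO. -/
theorem tso_weak_merge (Proc Var Val : Type) [Fintype Proc] [DecidableEq Proc]
    [DecidableEq Var] [Zero Val]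
    (σ1 σ2 : List (MemEv Proc Var Val))
    (h1solo : IsSolo σ1) (h1rwf : IsRWF σ1) (h1ltf : IsLTF σ1)
    (hdisj : memProcs σ1 ∩ memProcs σ2 = ∅) :
    WeaklyMergeable (TSOModel Proc Var Val) σ1 σ2 := by
  intro q0 hstable hσ1 hσ2
  have hbuf : ∀ q, q0.2 q = [] := stable_buffers (fun q' h => hstable q' h)
  by_cases hnil : σ1 = []
  · subst hnil
    exact ⟨σ2, shuffle_nil_left σ2, hσ2⟩
  · obtain ⟨e0, hmem⟩ := List.exists_mem_of_ne_nil σ1 hnil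
    set p := e0.proc with hp
    have hproc : ∀ e ∈ σ1, MemEv.proc e = p := fun e he => h1solo e he e0 hmem
    have hp2 : ∀ e ∈ σ2, MemEv.proc e ≠ p := by
      intro e he heq
      have : p ∈ memProcs σ1 ∩ memProcs σ2 := ⟨⟨e0, hmem, rfl⟩, ⟨e, he, heq⟩⟩
      rw [hdisj] at this
      exact this
    obtain ⟨σ', σ'', hsplit, hLF, hTF⟩ := h1ltf
    obtain ⟨F1, A, hF1A, hF1, hA⟩ := lf_decomp σ' hLF
    obtain ⟨B, F2, hBF2, hB, hF2⟩ := tf_decomp σ'' hTF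
    have hσ1eq : σ1 = (F1 ++ (A ++ B)) ++ F2 := by
      rw [hsplit, hF1A, hBF2]; simp [List.append_assoc]
    -- facts about events
    have hnoRMW : ∀ e ∈ σ1, ¬ MemEv.isRMW e := by
      intro e he ⟨x, u, v, hr⟩
      rcases h1rwf e he with ⟨y, w, h⟩ | ⟨y, w, h⟩ | h
      · rw [hr] at h; simp at h
      · rw [hr] at h; simp at h
      · unfold MemEv.isFence at h; rw [hr] at h; simp at h
    have hmidEv : ∀ e ∈ A ++ B, MemEv.proc e = p ∧ (MemEv.isWrite e ∨ MemEv.isRead e) := by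
      intro e he
      have heσ1 : e ∈ σ1 := by
        rw [hσ1eq]
        rcases List.mem_append.mp he with h | h <;> simp [h]
      refine ⟨hproc e heσ1, ?_⟩
      rcases h1rwf e heσ1 with h | h | h
      · exact Or.inl h
      · exact Or.inr h
      · rcases List.mem_append.mp he with hh | hh
        · exact absurd h (hA e hh)
        · exact absurd h (hB e hh)
    have hF1Ev : ∀ e ∈ F1, MemEv.proc e = p ∧ MemEv.isFence e :=
      fun e he => ⟨hproc e (by rw [hσ1eq]; simp [he]), hF1 e he⟩
    have hF2Ev : ∀ e ∈ F2, MemEv.proc e = p ∧ MemEv.isFence e :=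
      fun e he => ⟨hproc e (by rw [hσ1eq]; simp [he]), hF2 e he⟩
    -- ReadsOK for the middle section
    obtain ⟨π1, s1', hpath1, hred1⟩ := hσ1
    have hro1 : ReadsOK (effF q0.1 (q0.2 p)) σ1 := by
      rw [← hred1]
      exact readsOK_of_path p hpath1
        (fun e he => ⟨hproc e (hred1 ▸ he), hnoRMW e (hred1 ▸ he)⟩)
        (fun q hq => hbuf q)
    have hroMid : ReadsOK (effF q0.1 (q0.2 p)) (A ++ B) := by
      have h1 : ReadsOK (effF q0.1 (q0.2 p)) (F1 ++ ((A ++ B) ++ F2)) := by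
        rw [← List.append_assoc, ← hσ1eq]
        exact hro1
      exact readsOK_append_left (readsOK_dropF hF1 h1)
    -- build the run
    have P1 : LTSPath (TSOStep Proc Var Val) (q0.1, q0.2) (F1.map some) (q0.1, q0.2) :=
      fence_path p F1 hF1Ev q0.1 q0.2 (hbuf p)
    have P2 : LTSPath (TSOStep Proc Var Val) (q0.1, q0.2) ((A ++ B).map some)
        (q0.1, Function.update q0.2 p (q0.2 p ++ writesOf (A ++ B))) :=
      run_of_readsOK p (A ++ B) hmidEv q0.1 q0.2 hroMid
    set w : List (Var × Val) := q0.2 p ++ writesOf (A ++ B) with hw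
    obtain ⟨π2, s2, hpath2, hred2⟩ := hσ2
    obtain ⟨hfin, P3⟩ := frame_path p hpath2
      (fun e he => hp2 e (hred2 ▸ he)) (hbuf p) w
    obtain ⟨m3, P4⟩ := flush_path p w s2.1 (Function.update s2.2 p w)
      (Function.update_self p w s2.2)
    rw [Function.update_idem] at P4
    have P5 : LTSPath (TSOStep Proc Var Val) (m3, Function.update s2.2 p [])
        (F2.map some) (m3, Function.update s2.2 p []) :=
      fence_path p F2 hF2Ev m3 (Function.update s2.2 p [])
        (Function.update_self p ([] : List (Var × Val)) s2.2)
    have hpathAll : LTSPath (TSOStep Proc Var Val) (q0.1, q0.2)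
        (F1.map some ++ ((A ++ B).map some ++ (π2 ++ (List.replicate w.length none
          ++ F2.map some)))) (m3, Function.update s2.2 p []) :=
      LTSPath_append P1 (LTSPath_append P2 (LTSPath_append P3 (LTSPath_append P4 P5)))
    refine ⟨((F1 ++ (A ++ B)) ++ σ2) ++ F2, ?_, ?_⟩
    · rw [hσ1eq]
      exact shuffle_append_left
        (by simpa using shuffle_append_right (shuffle_nil_right (F1 ++ (A ++ B))) σ2) F2
    · refine ⟨F1.map some ++ ((A ++ B).map some ++ (π2 ++ (List.replicate w.length none
        ++ F2.map some))), (m3, Function.update s2.2 p []), hpathAll, ?_⟩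
      simp [List.reduceOption_append, reduceOption_map_some', reduceOption_replicate_none,
        hred2, List.append_assoc]


end WMM
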